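/- Let (A, μ, Δ, R) be a quasi-triangular bialgebra with R = Σ sᵢ ⊗ tᵢ, M an A-module with action λ, α_A : A → A a bialgebra morphism with (α_A ⊗ α_A)(R) = R, and α_M : M → M a linear map satisfying α_M ∘ λ = λ ∘ (α_A ⊗ α_M). Then the operator B_α : M ⊗ M → M ⊗ M defined by B_α(v ⊗ w) = Σ α_M(λ(tᵢ, w)) ⊗ α_M(λ(sᵢ, v)) is a solution of the Hom-Yang-Baxter equation for (M, α_M). -/

import Mathlib

open TensorProduct

variable {k : Type*} [CommRing k] {A : Type*} [AddCommGroup A] [Module k A]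

/-- Componentwise product on `A ⊗ A` induced by a bilinear multiplication `μ`. -/
noncomputable def mulT2 (μ : A →ₗ[k] A →ₗ[k] A) (X Y : A ⊗[k] A) : A ⊗[k] A :=
  ((TensorProduct.map (TensorProduct.lift μ) (TensorProduct.lift μ)) ∘ₗ
    (TensorProduct.tensorTensorTensorComm k A A A A).toLinearMap) (X ⊗ₜ[k] Y)

/-- Componentwise product on `(A ⊗ A) ⊗ A` induced by `μ`. -/
noncomputable def mulT3 (μ : A →ₗ[k] A →ₗ[k] A) (X Y : (A ⊗[k] A) ⊗[k] A) :
    (A ⊗[k] A) ⊗[k] A :=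
  ((TensorProduct.map
      ((TensorProduct.map (TensorProduct.lift μ) (TensorProduct.lift μ)) ∘ₗ
        (TensorProduct.tensorTensorTensorComm k A A A A).toLinearMap)
      (TensorProduct.lift μ)) ∘ₗ
    (TensorProduct.tensorTensorTensorComm k (A ⊗[k] A) A (A ⊗[k] A) A).toLinearMap)
    (X ⊗ₜ[k] Y)

/-- `R₁₂ = R ⊗ c`. -/
noncomputable def R12e (c : A) (R : A ⊗[k] A) : (A ⊗[k] A) ⊗[k] A := R ⊗ₜ[k] c

/-- `R₂₃ = c ⊗ R`. -/
noncomputable def R23e (c : A) (R : A ⊗[k] A) : (A ⊗[k] A) ⊗[k] A :=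
  (TensorProduct.assoc k A A A).symm (c ⊗ₜ[k] R)

/-- `R₁₃ = (τ ⊗ Id)(R₂₃)`. -/
noncomputable def R13e (c : A) (R : A ⊗[k] A) : (A ⊗[k] A) ⊗[k] A :=
  TensorProduct.map (TensorProduct.comm k A A).toLinearMap LinearMap.id (R23e c R)

lemma mulT2_tmul (μ : A →ₗ[k] A →ₗ[k] A) (a b a' b' : A) :
    mulT2 μ (a ⊗ₜ[k] b) (a' ⊗ₜ[k] b') = μ a a' ⊗ₜ[k] μ b b' := by
  simp [mulT2]

lemma mulT3_tmul (μ : A →ₗ[k] A →ₗ[k] A) (X Y : A ⊗[k] A) (c d : A) :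
    mulT3 μ (X ⊗ₜ[k] c) (Y ⊗ₜ[k] d) = mulT2 μ X Y ⊗ₜ[k] μ c d := by
  simp [mulT3, mulT2]

lemma mulT2_add_left (μ : A →ₗ[k] A →ₗ[k] A) (X X' Y : A ⊗[k] A) :
    mulT2 μ (X + X') Y = mulT2 μ X Y + mulT2 μ X' Y := by
  simp [mulT2, add_tmul]

lemma mulT2_add_right (μ : A →ₗ[k] A →ₗ[k] A) (X Y Y' : A ⊗[k] A) :
    mulT2 μ X (Y + Y') = mulT2 μ X Y + mulT2 μ X Y' := by
  simp [mulT2, tmul_add]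

lemma mulT2_zero_left (μ : A →ₗ[k] A →ₗ[k] A) (Y : A ⊗[k] A) :
    mulT2 μ 0 Y = 0 := by simp [mulT2, zero_tmul]

lemma mulT2_zero_right (μ : A →ₗ[k] A →ₗ[k] A) (X : A ⊗[k] A) :
    mulT2 μ X 0 = 0 := by simp [mulT2, tmul_zero]

lemma mulT3_add_left (μ : A →ₗ[k] A →ₗ[k] A) (X X' Y : (A ⊗[k] A) ⊗[k] A) :
    mulT3 μ (X + X') Y = mulT3 μ X Y + mulT3 μ X' Y := by
  simp [mulT3, add_tmul]

lemma mulT3_add_right (μ : A →ₗ[k] A →ₗ[k] A) (X Y Y' : (A ⊗[k] A) ⊗[k] A) :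
    mulT3 μ X (Y + Y') = mulT3 μ X Y + mulT3 μ X Y' := by
  simp [mulT3, tmul_add]

lemma mulT3_zero_left (μ : A →ₗ[k] A →ₗ[k] A) (Y : (A ⊗[k] A) ⊗[k] A) :
    mulT3 μ 0 Y = 0 := by simp [mulT3, zero_tmul]

lemma mulT3_zero_right (μ : A →ₗ[k] A →ₗ[k] A) (X : (A ⊗[k] A) ⊗[k] A) :
    mulT3 μ X 0 = 0 := by simp [mulT3, tmul_zero]

lemma mulT2_assoc (μ : A →ₗ[k] A →ₗ[k] A)
    (hassoc : ∀ x y z : A, μ (μ x y) z = μ x (μ y z)) (X Y Z : A ⊗[k] A) :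
    mulT2 μ (mulT2 μ X Y) Z = mulT2 μ X (mulT2 μ Y Z) := by
  induction X using TensorProduct.induction_on with
  | zero => simp [mulT2_zero_left]
  | add X X' hX hX' => simp [mulT2_add_left, hX, hX']
  | tmul a b =>
    induction Y using TensorProduct.induction_on with
    | zero => simp [mulT2_zero_left, mulT2_zero_right]
    | add Y Y' hY hY' => simp [mulT2_add_left, mulT2_add_right, hY, hY']
    | tmul a' b' =>
      induction Z using TensorProduct.induction_on with
      | zero => simp [mulT2_zero_right]
      | add Z Z' hZ hZ' => simp [mulT2_add_right, hZ, hZ']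
      | tmul a'' b'' => simp [mulT2_tmul, hassoc]

lemma mulT3_assoc (μ : A →ₗ[k] A →ₗ[k] A)
    (hassoc : ∀ x y z : A, μ (μ x y) z = μ x (μ y z)) (X Y Z : (A ⊗[k] A) ⊗[k] A) :
    mulT3 μ (mulT3 μ X Y) Z = mulT3 μ X (mulT3 μ Y Z) := by
  induction X using TensorProduct.induction_on with
  | zero => simp [mulT3_zero_left]
  | add X X' hX hX' => simp [mulT3_add_left, hX, hX']
  | tmul X1 c =>
    induction Y using TensorProduct.induction_on with
    | zero => simp [mulT3_zero_left, mulT3_zero_right]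
    | add Y Y' hY hY' => simp [mulT3_add_left, mulT3_add_right, hY, hY']
    | tmul Y1 d =>
      induction Z using TensorProduct.induction_on with
      | zero => simp [mulT3_zero_right]
      | add Z Z' hZ hZ' => simp [mulT3_add_right, hZ, hZ']
      | tmul Z1 e => simp [mulT3_tmul, hassoc, mulT2_assoc μ hassoc]

noncomputable def tau13 : (A ⊗[k] A) ⊗[k] A →ₗ[k] (A ⊗[k] A) ⊗[k] A :=
  TensorProduct.map (TensorProduct.comm k A A).toLinearMap LinearMap.id ∘ₗ
    (TensorProduct.comm k A (A ⊗[k] A)).toLinearMap ∘ₗ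
    (TensorProduct.assoc k A A A).toLinearMap

lemma tau13_tmul (a b c : A) :
    tau13 ((a ⊗ₜ[k] b) ⊗ₜ[k] c) = (c ⊗ₜ[k] b) ⊗ₜ[k] a := by
  simp [tau13]

noncomputable def theta : (A ⊗[k] A) ⊗[k] A →ₗ[k] (A ⊗[k] A) ⊗[k] A :=
  TensorProduct.map (TensorProduct.comm k A A).toLinearMap LinearMap.id

lemma theta_tmul (a b c : A) :
    theta ((a ⊗ₜ[k] b) ⊗ₜ[k] c) = (b ⊗ₜ[k] a) ⊗ₜ[k] c := by
  simp [theta]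

lemma theta_mul (μ : A →ₗ[k] A →ₗ[k] A) (X Y : (A ⊗[k] A) ⊗[k] A) :
    theta (mulT3 μ X Y) = mulT3 μ (theta X) (theta Y) := by
  induction X using TensorProduct.induction_on with
  | zero => simp [mulT3_zero_left]
  | add X X' hX hX' => simp [mulT3_add_left, hX, hX']
  | tmul X1 c =>
    induction Y using TensorProduct.induction_on with
    | zero => simp [mulT3_zero_right]
    | add Y Y' hY hY' => simp [mulT3_add_right, hY, hY']
    | tmul Y1 d =>
      induction X1 using TensorProduct.induction_on with
      | zero => simp [mulT3, zero_tmul, theta]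
      | add p q hp hq =>
        simp only [add_tmul, mulT3_add_left, map_add, hp, hq]
      | tmul a b =>
        induction Y1 using TensorProduct.induction_on with
        | zero => simp [mulT3, zero_tmul, theta]
        | add p q hp hq =>
          simp only [add_tmul, mulT3_add_right, map_add, hp, hq]
        | tmul a' b' =>
          simp [mulT3_tmul, mulT2_tmul, theta_tmul]

lemma tau13_mul (μ : A →ₗ[k] A →ₗ[k] A) (X Y : (A ⊗[k] A) ⊗[k] A) :
    tau13 (mulT3 μ X Y) = mulT3 μ (tau13 X) (tau13 Y) := by
  induction X using TensorProduct.induction_on with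
  | zero => simp [mulT3_zero_left]
  | add X X' hX hX' => simp [mulT3_add_left, hX, hX']
  | tmul X1 c =>
    induction Y using TensorProduct.induction_on with
    | zero => simp [mulT3_zero_right]
    | add Y Y' hY hY' => simp [mulT3_add_right, hY, hY']
    | tmul Y1 d =>
      induction X1 using TensorProduct.induction_on with
      | zero => simp [mulT3, zero_tmul, tau13]
      | add p q hp hq =>
        simp only [add_tmul, mulT3_add_left, map_add, hp, hq]
      | tmul a b =>
        induction Y1 using TensorProduct.induction_on with
        | zero => simp [mulT3, zero_tmul, tau13]
        | add p q hp hq =>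
          simp only [add_tmul, mulT3_add_right, map_add, hp, hq]
        | tmul a' b' =>
          simp [mulT3_tmul, mulT2_tmul, tau13_tmul]



lemma R12e_tmul (c a b : A) : R12e c (a ⊗ₜ[k] b) = (a ⊗ₜ[k] b) ⊗ₜ[k] c := rfl

lemma R23e_tmul (c a b : A) : R23e c (a ⊗ₜ[k] b) = (c ⊗ₜ[k] a) ⊗ₜ[k] b := by
  simp [R23e]

lemma R13e_tmul (c a b : A) : R13e c (a ⊗ₜ[k] b) = (a ⊗ₜ[k] c) ⊗ₜ[k] b := by
  simp [R13e, R23e_tmul]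

lemma R12e_add (c : A) (X Y : A ⊗[k] A) : R12e c (X + Y) = R12e c X + R12e c Y := by
  simp [R12e, add_tmul]
lemma R12e_zero (c : A) : R12e c (0 : A ⊗[k] A) = 0 := by simp [R12e]
lemma R23e_add (c : A) (X Y : A ⊗[k] A) : R23e c (X + Y) = R23e c X + R23e c Y := by
  simp [R23e, tmul_add]
lemma R23e_zero (c : A) : R23e c (0 : A ⊗[k] A) = 0 := by simp [R23e]
lemma R13e_add (c : A) (X Y : A ⊗[k] A) : R13e c (X + Y) = R13e c X + R13e c Y := by
  simp [R13e, R23e_add]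
lemma R13e_zero (c : A) : R13e c (0 : A ⊗[k] A) = 0 := by simp [R13e, R23e_zero]

lemma theta_R13e (c : A) (R : A ⊗[k] A) : theta (R13e c R) = R23e c R := by
  induction R using TensorProduct.induction_on with
  | zero => simp [R13e, R23e, theta]
  | add X Y hX hY => simp only [R13e, R23e, theta, map_add, tmul_add] at *; simp [hX, hY]
  | tmul a b => rw [R13e_tmul, theta_tmul, R23e_tmul]

lemma theta_R23e (c : A) (R : A ⊗[k] A) : theta (R23e c R) = R13e c R := rfl

lemma tau13_R12e (c : A) (R : A ⊗[k] A) :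
    tau13 (R12e c R) = R23e c ((TensorProduct.comm k A A) R) := by
  induction R using TensorProduct.induction_on with
  | zero => simp [R12e, R23e]
  | add X Y hX hY =>
      simp only [R12e, R23e, map_add, add_tmul, tmul_add] at *; simp [hX, hY]
  | tmul a b => rw [R12e_tmul, tau13_tmul, comm_tmul, R23e_tmul]

lemma tau13_R23e (c : A) (R : A ⊗[k] A) :
    tau13 (R23e c R) = R12e c ((TensorProduct.comm k A A) R) := by
  induction R using TensorProduct.induction_on with
  | zero => simp [R12e, R23e]
  | add X Y hX hY =>
      simp only [R12e, R23e, map_add, add_tmul, tmul_add] at *; simp [hX, hY]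
  | tmul a b => rw [R23e_tmul, tau13_tmul, comm_tmul, R12e_tmul]

lemma tau13_R13e (c : A) (R : A ⊗[k] A) :
    tau13 (R13e c R) = R13e c ((TensorProduct.comm k A A) R) := by
  induction R using TensorProduct.induction_on with
  | zero => simp [R13e, R23e]
  | add X Y hX hY =>
      simp only [R13e, R23e, map_add, add_tmul, tmul_add] at *; simp [hX, hY]
  | tmul a b => rw [R13e_tmul, tau13_tmul, comm_tmul, R13e_tmul]

/-- `R₁₂ ((Δ ⊗ id) Z) = ((τΔ ⊗ id) Z) R₁₂`, from `hR3`. -/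
lemma key12 (μ : A →ₗ[k] A →ₗ[k] A) (Δ : A →ₗ[k] A ⊗[k] A) (one : A)
    (R : A ⊗[k] A)
    (h1l : ∀ x : A, μ one x = x) (h1r : ∀ x : A, μ x one = x)
    (hR3 : ∀ x : A, mulT2 μ ((TensorProduct.comm k A A) (Δ x)) R = mulT2 μ R (Δ x))
    (Z : A ⊗[k] A) :
    mulT3 μ (R12e one R) (TensorProduct.map Δ LinearMap.id Z)
      = mulT3 μ (TensorProduct.map ((TensorProduct.comm k A A).toLinearMap ∘ₗ Δ)
          LinearMap.id Z) (R12e one R) := by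
  induction Z using TensorProduct.induction_on with
  | zero => simp [mulT3_zero_left, mulT3_zero_right]
  | add X Y hX hY => simp only [map_add, mulT3_add_left, mulT3_add_right, hX, hY]
  | tmul a c =>
      simp only [map_tmul, LinearMap.id_coe, id_eq, LinearMap.coe_comp, Function.comp_apply]
      rw [R12e, mulT3_tmul, mulT3_tmul, h1l, h1r, ← hR3]; rfl

lemma qybe (μ : A →ₗ[k] A →ₗ[k] A) (Δ : A →ₗ[k] A ⊗[k] A) (one : A) (R : A ⊗[k] A)
    (hassoc : ∀ x y z : A, μ (μ x y) z = μ x (μ y z))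
    (h1l : ∀ x : A, μ one x = x) (h1r : ∀ x : A, μ x one = x)
    (hR1 : TensorProduct.map Δ LinearMap.id R = mulT3 μ (R13e one R) (R23e one R))
    (hR3 : ∀ x : A, mulT2 μ ((TensorProduct.comm k A A) (Δ x)) R = mulT2 μ R (Δ x)) :
    mulT3 μ (R12e one R) (mulT3 μ (R13e one R) (R23e one R))
      = mulT3 μ (R23e one R) (mulT3 μ (R13e one R) (R12e one R)) := by
  have hΘΔ : TensorProduct.map ((TensorProduct.comm k A A).toLinearMap ∘ₗ Δ)
      LinearMap.id R = mulT3 μ (R23e one R) (R13e one R) := by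
    have : TensorProduct.map ((TensorProduct.comm k A A).toLinearMap ∘ₗ Δ)
        LinearMap.id R = theta (TensorProduct.map Δ LinearMap.id R) := by
      rw [theta, ← LinearMap.comp_apply, ← TensorProduct.map_comp, LinearMap.comp_id]
    rw [this, hR1, theta_mul, theta_R13e, theta_R23e]
  rw [← hR1, key12 μ Δ one R h1l h1r hR3, hΘΔ, mulT3_assoc μ hassoc]

lemma qybe' (μ : A →ₗ[k] A →ₗ[k] A) (Δ : A →ₗ[k] A ⊗[k] A) (one : A) (R : A ⊗[k] A)
    (hassoc : ∀ x y z : A, μ (μ x y) z = μ x (μ y z))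
    (h1l : ∀ x : A, μ one x = x) (h1r : ∀ x : A, μ x one = x)
    (hR1 : TensorProduct.map Δ LinearMap.id R = mulT3 μ (R13e one R) (R23e one R))
    (hR3 : ∀ x : A, mulT2 μ ((TensorProduct.comm k A A) (Δ x)) R = mulT2 μ R (Δ x)) :
    mulT3 μ (R23e one ((TensorProduct.comm k A A) R))
        (mulT3 μ (R13e one ((TensorProduct.comm k A A) R))
          (R12e one ((TensorProduct.comm k A A) R)))
      = mulT3 μ (R12e one ((TensorProduct.comm k A A) R))
        (mulT3 μ (R13e one ((TensorProduct.comm k A A) R))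
          (R23e one ((TensorProduct.comm k A A) R))) := by
  have h := congrArg tau13 (qybe μ Δ one R hassoc h1l h1r hR1 hR3)
  rwa [tau13_mul, tau13_mul, tau13_mul, tau13_mul, tau13_R12e, tau13_R13e, tau13_R23e] at h

variable {M : Type*} [AddCommGroup M] [Module k M]

/-- `B_α(v ⊗ w) = Σ α_M(λ(tᵢ, w)) ⊗ α_M(λ(sᵢ, v))` for `R = Σ sᵢ ⊗ tᵢ`. -/
noncomputable def Balpha (lam : A →ₗ[k] M →ₗ[k] M) (αM : M →ₗ[k] M) (R : A ⊗[k] A) :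
    M ⊗[k] M →ₗ[k] M ⊗[k] M :=
  TensorProduct.map αM αM ∘ₗ (TensorProduct.comm k M M).toLinearMap ∘ₗ
    (TensorProduct.homTensorHomMap (RingHom.id k) M M M M) (TensorProduct.map lam lam R)

lemma Balpha_tmul (lam : A →ₗ[k] M →ₗ[k] M) (αM : M →ₗ[k] M) (a b : A) (v w : M) :
    Balpha lam αM (a ⊗ₜ[k] b) (v ⊗ₜ[k] w) = αM (lam b w) ⊗ₜ[k] αM (lam a v) := by
  simp [Balpha]

lemma Balpha_add (lam : A →ₗ[k] M →ₗ[k] M) (αM : M →ₗ[k] M) (R R' : A ⊗[k] A) :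
    Balpha lam αM (R + R') = Balpha lam αM R + Balpha lam αM R' := by
  simp only [Balpha, map_add, LinearMap.comp_add]

lemma Balpha_zero (lam : A →ₗ[k] M →ₗ[k] M) (αM : M →ₗ[k] M) :
    Balpha lam αM (0 : A ⊗[k] A) = 0 := by
  simp only [Balpha, map_zero, LinearMap.comp_zero]

noncomputable def phi3 (lam : A →ₗ[k] M →ₗ[k] M) :
    (A ⊗[k] A) ⊗[k] A →ₗ[k] ((M ⊗[k] M) ⊗[k] M →ₗ[k] (M ⊗[k] M) ⊗[k] M) :=
  TensorProduct.homTensorHomMap (RingHom.id k) (M ⊗[k] M) M (M ⊗[k] M) M ∘ₗ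
    TensorProduct.map
      (TensorProduct.homTensorHomMap (RingHom.id k) M M M M ∘ₗ TensorProduct.map lam lam)
      lam

lemma phi3_tmul (lam : A →ₗ[k] M →ₗ[k] M) (a b c : A) (u v w : M) :
    phi3 lam ((a ⊗ₜ[k] b) ⊗ₜ[k] c) ((u ⊗ₜ[k] v) ⊗ₜ[k] w)
      = (lam a u ⊗ₜ[k] lam b v) ⊗ₜ[k] lam c w := by
  simp [phi3]

/-- `B_α`-type operators in positions (12) and (23). -/
noncomputable def PP (lam : A →ₗ[k] M →ₗ[k] M) (αM : M →ₗ[k] M) (R : A ⊗[k] A) :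
    (M ⊗[k] M) ⊗[k] M →ₗ[k] (M ⊗[k] M) ⊗[k] M :=
  TensorProduct.map (Balpha lam αM R) αM

noncomputable def QQ (lam : A →ₗ[k] M →ₗ[k] M) (αM : M →ₗ[k] M) (R : A ⊗[k] A) :
    (M ⊗[k] M) ⊗[k] M →ₗ[k] (M ⊗[k] M) ⊗[k] M :=
  (TensorProduct.assoc k M M M).symm.toLinearMap ∘ₗ
    TensorProduct.map αM (Balpha lam αM R) ∘ₗ (TensorProduct.assoc k M M M).toLinearMap

lemma PP_add (lam : A →ₗ[k] M →ₗ[k] M) (αM : M →ₗ[k] M) (R R' : A ⊗[k] A) (x) :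
    PP lam αM (R + R') x = PP lam αM R x + PP lam αM R' x := by
  simp only [PP, Balpha_add, TensorProduct.map_add_left, LinearMap.add_apply]

lemma PP_zero (lam : A →ₗ[k] M →ₗ[k] M) (αM : M →ₗ[k] M) (x) :
    PP lam αM (0 : A ⊗[k] A) x = 0 := by
  have h : PP lam αM (0 : A ⊗[k] A) = 0 := by
    rw [PP, Balpha_zero]
    apply TensorProduct.ext'
    intro p q
    simp
  rw [h]; rfl

lemma QQ_add (lam : A →ₗ[k] M →ₗ[k] M) (αM : M →ₗ[k] M) (R R' : A ⊗[k] A) (x) :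
    QQ lam αM (R + R') x = QQ lam αM R x + QQ lam αM R' x := by
  simp only [QQ, Balpha_add, TensorProduct.map_add_right, LinearMap.add_apply,
    LinearMap.comp_apply, LinearMap.add_comp, LinearMap.comp_add, map_add]

lemma QQ_zero (lam : A →ₗ[k] M →ₗ[k] M) (αM : M →ₗ[k] M) (x) :
    QQ lam αM (0 : A ⊗[k] A) x = 0 := by
  have : TensorProduct.map αM (Balpha lam αM (0 : A ⊗[k] A))
      = (0 : M ⊗[k] (M ⊗[k] M) →ₗ[k] M ⊗[k] (M ⊗[k] M)) := by
    rw [Balpha_zero]; ext x y z; simp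
  simp [QQ, this]
lemma big_L (μ : A →ₗ[k] A →ₗ[k] A) (one : A)
    (h1l : ∀ x : A, μ one x = x) (h1r : ∀ x : A, μ x one = x)
    (lam : A →ₗ[k] M →ₗ[k] M)
    (hmod1 : ∀ a b : A, ∀ x : M, lam (μ a b) x = lam a (lam b x))
    (hmod2 : ∀ x : M, lam one x = x)
    (αA : A →ₗ[k] A) (αM : M →ₗ[k] M)
    (hcomm : ∀ a : A, ∀ x : M, αM (lam a x) = lam (αA a) (αM x))
    (R1 R2 R3 : A ⊗[k] A) (u v w : M) :
    QQ lam αM R3 (PP lam αM R2 (QQ lam αM R1 ((u ⊗ₜ[k] v) ⊗ₜ[k] w)))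
      = phi3 lam
          (mulT3 μ (R23e one ((TensorProduct.comm k A A) (TensorProduct.map αA αA R3)))
            (mulT3 μ
              (R13e one ((TensorProduct.comm k A A)
                (TensorProduct.map αA αA (TensorProduct.map αA αA R2))))
              (R12e one ((TensorProduct.comm k A A)
                (TensorProduct.map αA αA (TensorProduct.map αA αA (TensorProduct.map αA αA R1)))))))
          ((αM (αM (αM w)) ⊗ₜ[k] αM (αM (αM v))) ⊗ₜ[k] αM (αM (αM u))) := by
  induction R1 using TensorProduct.induction_on with
  | zero =>
      rw [QQ_zero]
      simp [R12e_zero, mulT3_zero_right]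
  | add X Y hX hY =>
      rw [QQ_add]
      simp only [map_add, R12e_add, mulT3_add_right, LinearMap.add_apply, hX, hY]
  | tmul a1 b1 =>
  induction R2 using TensorProduct.induction_on with
  | zero =>
      rw [PP_zero]
      simp [R13e_zero, mulT3_zero_left, mulT3_zero_right]
  | add X Y hX hY =>
      rw [PP_add]
      simp only [map_add, R13e_add, mulT3_add_left, mulT3_add_right, LinearMap.add_apply, hX, hY]
  | tmul a2 b2 =>
  induction R3 using TensorProduct.induction_on with
  | zero =>
      rw [QQ_zero]
      simp [R23e_zero, mulT3_zero_left]
  | add X Y hX hY =>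
      rw [QQ_add]
      simp only [map_add, R23e_add, mulT3_add_left, LinearMap.add_apply, hX, hY]
  | tmul a3 b3 =>
      simp [QQ, PP, Balpha_tmul, R12e, R23e_tmul, R13e_tmul, mulT3_tmul, mulT2_tmul,
        phi3_tmul, h1l, h1r, hcomm, hmod1, hmod2]

lemma big_R (μ : A →ₗ[k] A →ₗ[k] A) (one : A)
    (h1l : ∀ x : A, μ one x = x) (h1r : ∀ x : A, μ x one = x)
    (lam : A →ₗ[k] M →ₗ[k] M)
    (hmod1 : ∀ a b : A, ∀ x : M, lam (μ a b) x = lam a (lam b x))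
    (hmod2 : ∀ x : M, lam one x = x)
    (αA : A →ₗ[k] A) (αM : M →ₗ[k] M)
    (hcomm : ∀ a : A, ∀ x : M, αM (lam a x) = lam (αA a) (αM x))
    (R1 R2 R3 : A ⊗[k] A) (u v w : M) :
    PP lam αM R3 (QQ lam αM R2 (PP lam αM R1 ((u ⊗ₜ[k] v) ⊗ₜ[k] w)))
      = phi3 lam
          (mulT3 μ (R12e one ((TensorProduct.comm k A A) (TensorProduct.map αA αA R3)))
            (mulT3 μ
              (R13e one ((TensorProduct.comm k A A)
                (TensorProduct.map αA αA (TensorProduct.map αA αA R2))))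
              (R23e one ((TensorProduct.comm k A A)
                (TensorProduct.map αA αA (TensorProduct.map αA αA (TensorProduct.map αA αA R1)))))))
          ((αM (αM (αM w)) ⊗ₜ[k] αM (αM (αM v))) ⊗ₜ[k] αM (αM (αM u))) := by
  induction R1 using TensorProduct.induction_on with
  | zero =>
      rw [PP_zero]
      simp [R23e_zero, mulT3_zero_right]
  | add X Y hX hY =>
      rw [PP_add]
      simp only [map_add, R23e_add, mulT3_add_right, LinearMap.add_apply, hX, hY]
  | tmul a1 b1 =>
  induction R2 using TensorProduct.induction_on with
  | zero =>
      rw [QQ_zero]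
      simp [R13e_zero, mulT3_zero_left, mulT3_zero_right]
  | add X Y hX hY =>
      rw [QQ_add]
      simp only [map_add, R13e_add, mulT3_add_left, mulT3_add_right, LinearMap.add_apply, hX, hY]
  | tmul a2 b2 =>
  induction R3 using TensorProduct.induction_on with
  | zero =>
      rw [PP_zero]
      simp [R12e_zero, mulT3_zero_left]
  | add X Y hX hY =>
      rw [PP_add]
      simp only [map_add, R12e_add, mulT3_add_left, LinearMap.add_apply, hX, hY]
  | tmul a3 b3 =>
      simp [QQ, PP, Balpha_tmul, R12e, R23e_tmul, R13e_tmul, mulT3_tmul, mulT2_tmul,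
        phi3_tmul, h1l, h1r, hcomm, hmod1, hmod2]
lemma part1_aux (lam : A →ₗ[k] M →ₗ[k] M) (αA : A →ₗ[k] A) (αM : M →ₗ[k] M)
    (hcomm : ∀ a : A, ∀ x : M, αM (lam a x) = lam (αA a) (αM x))
    (R' : A ⊗[k] A) (v w : M) :
    TensorProduct.map αM αM (Balpha lam αM R' (v ⊗ₜ[k] w))
      = Balpha lam αM (TensorProduct.map αA αA R') (αM v ⊗ₜ[k] αM w) := by
  induction R' using TensorProduct.induction_on with
  | zero => simp [Balpha_zero]
  | add X Y hX hY => simp only [map_add, Balpha_add, LinearMap.add_apply, hX, hY]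
  | tmul a b => simp [Balpha_tmul, hcomm]


/-- If `(A, μ, Δ, R)` is a quasi-triangular bialgebra, `M` an `A`-module,
`α_A` a bialgebra morphism with `(α_A ⊗ α_A)(R) = R`, and `α_M` a linear map compatible
with the action, then `B_α` is a solution of the Hom-Yang-Baxter equation for `(M, α_M)`. -/
theorem classical_module_gives_hybe_solution
    (μ : A →ₗ[k] A →ₗ[k] A) (Δ : A →ₗ[k] A ⊗[k] A) (ε : A →ₗ[k] k) (one : A)
    (R : A ⊗[k] A)
    (hassoc : ∀ x y z : A, μ (μ x y) z = μ x (μ y z))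
    (h1l : ∀ x : A, μ one x = x) (h1r : ∀ x : A, μ x one = x)
    (hcoassoc : (TensorProduct.assoc k A A A).toLinearMap ∘ₗ
        TensorProduct.map Δ LinearMap.id ∘ₗ Δ = TensorProduct.map LinearMap.id Δ ∘ₗ Δ)
    (hεl : ∀ x : A, (TensorProduct.lid k A) (TensorProduct.map ε LinearMap.id (Δ x)) = x)
    (hεr : ∀ x : A, (TensorProduct.rid k A) (TensorProduct.map LinearMap.id ε (Δ x)) = x)
    (hcompat : ∀ x y : A, Δ (μ x y) = mulT2 μ (Δ x) (Δ y))
    (hΔ1 : Δ one = one ⊗ₜ[k] one)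
    (hε1 : ε one = 1) (hεμ : ∀ x y : A, ε (μ x y) = ε x * ε y)
    -- quasi-triangularity of (A, R):
    (hR1 : TensorProduct.map Δ LinearMap.id R = mulT3 μ (R13e one R) (R23e one R))
    (hR2 : (TensorProduct.assoc k A A A).symm (TensorProduct.map LinearMap.id Δ R)
      = mulT3 μ (R13e one R) (R12e one R))
    (hR3 : ∀ x : A, mulT2 μ ((TensorProduct.comm k A A) (Δ x)) R = mulT2 μ R (Δ x))
    -- M is an A-module:
    (lam : A →ₗ[k] M →ₗ[k] M)
    (hmod1 : ∀ a b : A, ∀ x : M, lam (μ a b) x = lam a (lam b x))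
    (hmod2 : ∀ x : M, lam one x = x)
    -- α_A is a bialgebra morphism fixing R:
    (αA : A →ₗ[k] A)
    (hαμ : ∀ x y : A, αA (μ x y) = μ (αA x) (αA y))
    (hαΔ : Δ ∘ₗ αA = TensorProduct.map αA αA ∘ₗ Δ)
    (hinv : TensorProduct.map αA αA R = R)
    -- α_M is compatible with the action:
    (αM : M →ₗ[k] M)
    (hcomm : ∀ a : A, ∀ x : M, αM (lam a x) = lam (αA a) (αM x)) :
    (TensorProduct.map αM αM ∘ₗ Balpha lam αM R
        = Balpha lam αM R ∘ₗ TensorProduct.map αM αM) ∧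
    (((TensorProduct.assoc k M M M).symm.toLinearMap ∘ₗ
          TensorProduct.map αM (Balpha lam αM R) ∘ₗ
          (TensorProduct.assoc k M M M).toLinearMap) ∘ₗ
        TensorProduct.map (Balpha lam αM R) αM ∘ₗ
        ((TensorProduct.assoc k M M M).symm.toLinearMap ∘ₗ
          TensorProduct.map αM (Balpha lam αM R) ∘ₗ
          (TensorProduct.assoc k M M M).toLinearMap)
      = TensorProduct.map (Balpha lam αM R) αM ∘ₗ
        ((TensorProduct.assoc k M M M).symm.toLinearMap ∘ₗ
          TensorProduct.map αM (Balpha lam αM R) ∘ₗ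
          (TensorProduct.assoc k M M M).toLinearMap) ∘ₗ
        TensorProduct.map (Balpha lam αM R) αM) := by
  constructor
  · apply TensorProduct.ext'
    intro v w
    simp only [LinearMap.comp_apply, map_tmul]
    rw [part1_aux lam αA αM hcomm, hinv]
  · show QQ lam αM R ∘ₗ PP lam αM R ∘ₗ QQ lam αM R
      = PP lam αM R ∘ₗ QQ lam αM R ∘ₗ PP lam αM R
    apply TensorProduct.ext_threefold
    intro u v w
    simp only [LinearMap.comp_apply]
    rw [big_L μ one h1l h1r lam hmod1 hmod2 αA αM hcomm R R R u v w,
      big_R μ one h1l h1r lam hmod1 hmod2 αA αM hcomm R R R u v w,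
      hinv, hinv, hinv, qybe' μ Δ one R hassoc h1l h1r hR1 hR3]
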